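/- Let Y be a nonempty finite set, π_ref a strictly positive probability distribution on Y, r : Y → ℝ, and λ₁ > 0, λ₂ > 0. Set β = λ₂/λ₁ (so that 1/β = λ₁/λ₂). Define the RLHF policy π_RLHF(y) = π_ref(y)·exp(r(y)/β) / Z₁ with Z₁ = ∑_{y'} π_ref(y')·exp(r(y')/β), and the QEMPO-KL policy π_QK(y) = π_ref(y)^{λ₂/(λ₂+1)}·exp(λ₁·r(y)/(λ₂+1)) / Z₂ with Z₂ = ∑_{y'} π_ref(y')^{λ₂/(λ₂+1)}·exp(λ₁·r(y')/(λ₂+1)). Then H(π_QK) ≥ H(π_RLHF). -/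

import Mathlib

open Real Finset

/-- Gibbs' inequality: for strictly positive distributions p, q on a finite type,
∑ p log q ≤ ∑ p log p. -/
lemma gibbs_aux {Y : Type*} [Fintype Y] (p q : Y → ℝ)
    (hp : ∀ y, 0 < p y) (hq : ∀ y, 0 < q y)
    (hps : ∑ y, p y = 1) (hqs : ∑ y, q y = 1) :
    ∑ y, p y * Real.log (q y) ≤ ∑ y, p y * Real.log (p y) := by
  have key : ∀ y, p y * Real.log (q y) - p y * Real.log (p y) ≤ q y - p y := by
    intro y
    have h := Real.log_le_sub_one_of_pos (div_pos (hq y) (hp y))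
    rw [Real.log_div (hq y).ne' (hp y).ne'] at h
    have h2 := mul_le_mul_of_nonneg_left h (hp y).le
    have h3 : p y * (q y / p y - 1) = q y - p y := by
      rw [mul_sub, mul_one, mul_div_cancel₀ _ (hp y).ne']
    calc p y * Real.log (q y) - p y * Real.log (p y)
        = p y * (Real.log (q y) - Real.log (p y)) := by ring
      _ ≤ p y * (q y / p y - 1) := h2
      _ = q y - p y := h3
  have hsum : ∑ y, (p y * Real.log (q y) - p y * Real.log (p y)) ≤ ∑ y, (q y - p y) :=
    Finset.sum_le_sum fun y _ => key y
  rw [Finset.sum_sub_distrib, Finset.sum_sub_distrib, hps, hqs] at hsum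
  linarith

/-- Escort distribution with exponent α ∈ (0,1) has larger entropy. -/
lemma escort_entropy {Y : Type*} [Fintype Y] [Nonempty Y] (p : Y → ℝ)
    (hp : ∀ y, 0 < p y) (hps : ∑ y, p y = 1)
    (α : ℝ) (hα0 : 0 < α) (hα1 : α < 1)
    (q : Y → ℝ) (hq : ∀ y, q y = p y ^ α / (∑ y', p y' ^ α)) :
    (-∑ y, p y * Real.log (p y)) ≤ (-∑ y, q y * Real.log (q y)) := by
  set Z : ℝ := ∑ y', p y' ^ α with hZ
  have hZpos : 0 < Z := Finset.sum_pos (fun y _ => Real.rpow_pos_of_pos (hp y) α)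
    Finset.univ_nonempty
  have hqpos : ∀ y, 0 < q y := fun y => by
    rw [hq y]; exact div_pos (Real.rpow_pos_of_pos (hp y) α) hZpos
  have hqs : ∑ y, q y = 1 := by
    simp only [hq]
    rw [← Finset.sum_div, ← hZ, div_self hZpos.ne']
  have hlogq : ∀ y, Real.log (q y) = α * Real.log (p y) - Real.log Z := fun y => by
    rw [hq y, Real.log_div (Real.rpow_pos_of_pos (hp y) α).ne' hZpos.ne',
      Real.log_rpow (hp y)]
  -- Gibbs 1: ∑ p log q ≤ ∑ p log p
  have g1 := gibbs_aux p q hp hqpos hps hqs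
  have e1 : ∑ y, p y * Real.log (q y)
      = α * (∑ y, p y * Real.log (p y)) - Real.log Z := by
    calc ∑ y, p y * Real.log (q y)
        = ∑ y, (α * (p y * Real.log (p y)) - p y * Real.log Z) := by
          refine Finset.sum_congr rfl fun y _ => ?_
          rw [hlogq y]; ring
      _ = α * (∑ y, p y * Real.log (p y)) - Real.log Z := by
          rw [Finset.sum_sub_distrib, ← Finset.mul_sum, ← Finset.sum_mul, hps, one_mul]
  -- Gibbs 2: ∑ q log p ≤ ∑ q log q
  have g2 := gibbs_aux q p hqpos hp hqs hps
  have e2 : ∑ y, q y * Real.log (q y)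
      = α * (∑ y, q y * Real.log (p y)) - Real.log Z := by
    calc ∑ y, q y * Real.log (q y)
        = ∑ y, (α * (q y * Real.log (p y)) - q y * Real.log Z) := by
          refine Finset.sum_congr rfl fun y _ => ?_
          rw [hlogq y]; ring
      _ = α * (∑ y, q y * Real.log (p y)) - Real.log Z := by
          rw [Finset.sum_sub_distrib, ← Finset.mul_sum, ← Finset.sum_mul, hqs, one_mul]
  set Sp := ∑ y, p y * Real.log (p y)
  set Sq := ∑ y, q y * Real.log (q y)
  -- from g1: α * Sp - log Z ≤ Sp, so Sp ≥ -log Z / (1-α)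
  -- from g2 and e2: Sq ≤ -log Z / (1-α)
  have h1 : α * Sp - Real.log Z ≤ Sp := by rw [← e1]; exact g1
  have h2 : (Sq + Real.log Z) / α ≤ Sq := by
    have : ∑ y, q y * Real.log (p y) = (Sq + Real.log Z) / α := by
      rw [e2]; field_simp; ring
    rw [← this]; exact g2
  have h2' : Sq + Real.log Z ≤ α * Sq := by
    have := (div_le_iff₀ hα0).mp h2
    linarith [mul_comm Sq α]
  nlinarith

/-- With β = λ₂/λ₁, the QEMPO-KL policy has entropy at least that of the
RLHF policy: H(π_QK) ≥ H(π_RLHF). -/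
theorem stmt_4 {Y : Type*} [Fintype Y] [Nonempty Y]
    (πref : Y → ℝ) (href_pos : ∀ y, 0 < πref y) (href_sum : ∑ y, πref y = 1)
    (r : Y → ℝ) (lam₁ lam₂ : ℝ) (hlam₁ : 0 < lam₁) (hlam₂ : 0 < lam₂)
    (β : ℝ) (hβ : β = lam₂ / lam₁)
    (Z₁ : ℝ) (hZ₁ : Z₁ = ∑ y, πref y * Real.exp (r y / β))
    (πRLHF : Y → ℝ) (hπRLHF : ∀ y, πRLHF y = πref y * Real.exp (r y / β) / Z₁)
    (Z₂ : ℝ)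
    (hZ₂ : Z₂ = ∑ y, (πref y) ^ (lam₂ / (lam₂ + 1)) * Real.exp (lam₁ * r y / (lam₂ + 1)))
    (πQK : Y → ℝ)
    (hπQK : ∀ y, πQK y = (πref y) ^ (lam₂ / (lam₂ + 1)) * Real.exp (lam₁ * r y / (lam₂ + 1)) / Z₂) :
    (-∑ y, πRLHF y * Real.log (πRLHF y)) ≤ (-∑ y, πQK y * Real.log (πQK y)) := by
  have hβpos : 0 < β := hβ ▸ div_pos hlam₂ hlam₁
  have hZ₁pos : 0 < Z₁ := by
    rw [hZ₁]
    exact Finset.sum_pos (fun y _ => mul_pos (href_pos y) (Real.exp_pos _))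
      Finset.univ_nonempty
  have hppos : ∀ y, 0 < πRLHF y := fun y => by
    rw [hπRLHF y]; exact div_pos (mul_pos (href_pos y) (Real.exp_pos _)) hZ₁pos
  have hpsum : ∑ y, πRLHF y = 1 := by
    simp only [hπRLHF]
    rw [← Finset.sum_div, ← hZ₁, div_self hZ₁pos.ne']
  set α : ℝ := lam₂ / (lam₂ + 1) with hα
  have hα0 : 0 < α := div_pos hlam₂ (by linarith)
  have hα1 : α < 1 := (div_lt_one (by linarith)).mpr (by linarith)
  -- key pointwise identity
  have key : ∀ y, πRLHF y ^ α
      = (πref y) ^ α * Real.exp (lam₁ * r y / (lam₂ + 1)) / Z₁ ^ α := by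
    intro y
    rw [hπRLHF y, Real.div_rpow (mul_pos (href_pos y) (Real.exp_pos _)).le hZ₁pos.le,
      Real.mul_rpow (href_pos y).le (Real.exp_pos _).le, ← Real.exp_mul]
    congr 3
    rw [hβ, hα]
    field_simp
  have hZ₂eq : ∑ y, πRLHF y ^ α = Z₂ / Z₁ ^ α := by
    simp only [key]
    rw [← Finset.sum_div, hZ₂]
  have hZ₁αpos : 0 < Z₁ ^ α := Real.rpow_pos_of_pos hZ₁pos α
  have hZ₂pos : 0 < Z₂ := by
    rw [hZ₂]
    exact Finset.sum_pos (fun y _ =>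
      mul_pos (Real.rpow_pos_of_pos (href_pos y) _) (Real.exp_pos _))
      Finset.univ_nonempty
  have hq : ∀ y, πQK y = πRLHF y ^ α / (∑ y', πRLHF y' ^ α) := by
    intro y
    rw [hZ₂eq, key y, hπQK y]
    field_simp
  exact escort_entropy πRLHF hppos hpsum α hα0 hα1 πQK hq
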